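/- Let ζ ∈ C²(ℝ^d) with bounded second derivatives, and v bounded measurable. Then the first-order commutator expansion holds: [ζ, G_{h/2}∗]v(x) = −(h/2) ∇G_{h/2}∗(∇ζ v)(x) + R(x), where the remainder satisfies |R(x)| ≤ C ‖∇²ζ‖_∞ h (k_h∗|v|)(x), with k_h the kernel of mass scale h given by the mask k(z)=|z|²G_{1/2}(z), and C depending only on d. -/

import Mathlib

open Real MeasureTheory
open scoped RealInnerProductSpace

/-- The centered Gaussian kernel of variance `h` on `ℝ^d`. -/
noncomputable def gauss (d : ℕ) (h : ℝ) (z : EuclideanSpace ℝ (Fin d)) : ℝ :=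
  (2 * π * h) ^ (-(d : ℝ) / 2) * Real.exp (-‖z‖ ^ 2 / (2 * h))

/-- Convolution of two functions on `ℝ^d`. -/
noncomputable def conv (d : ℕ) (f g : EuclideanSpace ℝ (Fin d) → ℝ)
    (x : EuclideanSpace ℝ (Fin d)) : ℝ :=
  ∫ z, f z * g (x - z)

/-- The commutator `[ζ, G_h∗]v = ζ·(G_h∗v) − G_h∗(ζv)`. -/
noncomputable def commG (d : ℕ) (h : ℝ) (ζ v : EuclideanSpace ℝ (Fin d) → ℝ)
    (x : EuclideanSpace ℝ (Fin d)) : ℝ :=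
  ζ x * conv d (gauss d h) v x - conv d (gauss d h) (fun y => ζ y * v y) x

/-- The gradient `∇G_h(z) = -(G_h(z)/h) z` of the Gaussian kernel. -/
noncomputable def gradGauss (d : ℕ) (h : ℝ) (z : EuclideanSpace ℝ (Fin d)) :
    EuclideanSpace ℝ (Fin d) :=
  (-(gauss d h z) / h) • z

/-- The rescaled kernel `k_h(z) = h^{-d/2} k(z/√h)` with mask `k(z) = |z|² π^{-d/2} e^{-|z|²}`,
i.e. `k_h(z) = h^{-d/2} (|z|²/h) π^{-d/2} e^{-|z|²/h}`. -/
noncomputable def kker (d : ℕ) (h : ℝ) (z : EuclideanSpace ℝ (Fin d)) : ℝ :=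
  h ^ (-(d : ℝ) / 2) * ((‖z‖ ^ 2 / h) * π ^ (-(d : ℝ) / 2) * Real.exp (-(‖z‖ ^ 2 / h)))

section Aux

variable {d : ℕ}

local notation "E" => EuclideanSpace ℝ (Fin d)

lemma integrable_exp_gauss (a : ℝ) (ha : 0 < a) :
    Integrable (fun z : E => Real.exp (-a * ‖z‖ ^ 2)) := by
  have h := (GaussianFourier.integrable_cexp_neg_mul_sq_norm_add
    (V := EuclideanSpace ℝ (Fin d)) (b := (a : ℂ)) (by simpa using ha) 0 0).norm
  simpa [Complex.norm_exp, ← Complex.ofReal_pow] using h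

lemma integrable_sq_exp_gauss (a : ℝ) (ha : 0 < a) :
    Integrable (fun z : E => ‖z‖ ^ 2 * Real.exp (-a * ‖z‖ ^ 2)) := by
  apply Integrable.mono' ((integrable_exp_gauss (a / 2) (half_pos ha)).const_mul (2 / a))
  · exact ((continuous_norm.pow 2).mul
      (Real.continuous_exp.comp (by fun_prop))).aestronglyMeasurable
  · filter_upwards with z
    have h0 : (0 : ℝ) ≤ ‖z‖ ^ 2 * Real.exp (-a * ‖z‖ ^ 2) := by positivity
    rw [Real.norm_eq_abs, abs_of_nonneg h0]
    have h1 : a / 2 * ‖z‖ ^ 2 ≤ Real.exp (a / 2 * ‖z‖ ^ 2) := by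
      linarith [Real.add_one_le_exp (a / 2 * ‖z‖ ^ 2)]
    have hz : (0 : ℝ) ≤ Real.exp (-a * ‖z‖ ^ 2) := (Real.exp_pos _).le
    have key : a / 2 * (‖z‖ ^ 2 * Real.exp (-a * ‖z‖ ^ 2)) ≤ Real.exp (-(a / 2) * ‖z‖ ^ 2) := by
      calc a / 2 * (‖z‖ ^ 2 * Real.exp (-a * ‖z‖ ^ 2))
          = (a / 2 * ‖z‖ ^ 2) * Real.exp (-a * ‖z‖ ^ 2) := by ring
        _ ≤ Real.exp (a / 2 * ‖z‖ ^ 2) * Real.exp (-a * ‖z‖ ^ 2) :=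
            mul_le_mul_of_nonneg_right h1 hz
        _ = Real.exp (-(a / 2) * ‖z‖ ^ 2) := by rw [← Real.exp_add]; ring_nf
    calc ‖z‖ ^ 2 * Real.exp (-a * ‖z‖ ^ 2)
        = 2 / a * (a / 2 * (‖z‖ ^ 2 * Real.exp (-a * ‖z‖ ^ 2))) := by field_simp
      _ ≤ 2 / a * Real.exp (-(a / 2) * ‖z‖ ^ 2) :=
          mul_le_mul_of_nonneg_left key (by positivity)

lemma integrable_norm_exp_gauss (a : ℝ) (ha : 0 < a) :
    Integrable (fun z : E => ‖z‖ * Real.exp (-a * ‖z‖ ^ 2)) := by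
  apply Integrable.mono' ((integrable_exp_gauss a ha).add (integrable_sq_exp_gauss a ha))
  · exact (continuous_norm.mul
      (Real.continuous_exp.comp (by fun_prop))).aestronglyMeasurable
  · filter_upwards with z
    simp only [Pi.add_apply]
    have h0 : (0 : ℝ) ≤ ‖z‖ * Real.exp (-a * ‖z‖ ^ 2) := by positivity
    rw [Real.norm_eq_abs, abs_of_nonneg h0]
    have hz : (0 : ℝ) ≤ Real.exp (-a * ‖z‖ ^ 2) := (Real.exp_pos _).le
    have h1 : ‖z‖ ≤ 1 + ‖z‖ ^ 2 := by nlinarith [sq_nonneg (‖z‖ - 1), norm_nonneg z]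
    nlinarith [mul_le_mul_of_nonneg_right h1 hz]

lemma grad_contDiff {ζ : E → ℝ} (hζ : ContDiff ℝ 2 ζ) : ContDiff ℝ 1 (gradient ζ) := by
  have h1 : ContDiff ℝ 1 (fderiv ℝ ζ) := hζ.fderiv_right (by norm_num)
  exact ((InnerProductSpace.toDual ℝ (EuclideanSpace ℝ (Fin d))).symm.contDiff).comp h1

lemma inner_grad (ζ : E → ℝ) (y u : E) : ⟪gradient ζ y, u⟫ = fderiv ℝ ζ y u :=
  InnerProductSpace.toDual_symm_apply

lemma grad_lip {ζ : E → ℝ} (hζ : ContDiff ℝ 2 ζ) {M₂ : ℝ}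
    (hM : ∀ x, ‖fderiv ℝ (fun y => gradient ζ y) x‖ ≤ M₂) (a b : E) :
    ‖gradient ζ a - gradient ζ b‖ ≤ M₂ * ‖a - b‖ :=
  Convex.norm_image_sub_le_of_norm_fderiv_le
    (fun y _ => ((grad_contDiff hζ).differentiable (by norm_num)).differentiableAt)
    (fun y _ => hM y) convex_univ (Set.mem_univ b) (Set.mem_univ a)

lemma taylor_bound {ζ : E → ℝ} (hζ : ContDiff ℝ 2 ζ) {M₂ : ℝ}
    (hM : ∀ x, ‖fderiv ℝ (fun y => gradient ζ y) x‖ ≤ M₂) (x z : E) :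
    |ζ x - ζ (x - z) - ⟪z, gradient ζ (x - z)⟫| ≤ M₂ * ‖z‖ ^ 2 := by
  have hM0 : 0 ≤ M₂ := le_trans (norm_nonneg _) (hM x)
  have hx : x - (x - z) = z := by abel
  have hdiff : ∀ y : E,
      HasFDerivAt (fun y => ζ y - ⟪gradient ζ (x - z), y⟫)
        (fderiv ℝ ζ y - innerSL ℝ (gradient ζ (x - z))) y := fun y =>
    ((hζ.differentiable (by norm_num)) y).hasFDerivAt.sub
      ((innerSL ℝ (gradient ζ (x - z))).hasFDerivAt)
  have hseg : segment ℝ (x - z) x ⊆ Metric.closedBall (x - z) ‖z‖ := by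
    apply (convex_closedBall _ _).segment_subset
    · simp
    · simp [Metric.mem_closedBall, dist_eq_norm, hx]
  have hbound : ∀ y ∈ segment ℝ (x - z) x,
      ‖fderiv ℝ (fun y => ζ y - ⟪gradient ζ (x - z), y⟫) y‖ ≤ M₂ * ‖z‖ := by
    intro y hy
    rw [(hdiff y).fderiv]
    apply ContinuousLinearMap.opNorm_le_bound _ (by positivity)
    intro u
    have happ : (fderiv ℝ ζ y - innerSL ℝ (gradient ζ (x - z))) u
        = ⟪gradient ζ y - gradient ζ (x - z), u⟫ := by
      rw [ContinuousLinearMap.sub_apply, inner_sub_left, inner_grad, innerSL_apply_apply]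
    rw [happ, Real.norm_eq_abs]
    have hyb : ‖y - (x - z)‖ ≤ ‖z‖ := by
      have := hseg hy
      rwa [Metric.mem_closedBall, dist_eq_norm] at this
    calc |⟪gradient ζ y - gradient ζ (x - z), u⟫|
        ≤ ‖gradient ζ y - gradient ζ (x - z)‖ * ‖u‖ := abs_real_inner_le_norm _ _
      _ ≤ M₂ * ‖z‖ * ‖u‖ := by
          apply mul_le_mul_of_nonneg_right _ (norm_nonneg u)
          calc ‖gradient ζ y - gradient ζ (x - z)‖
              ≤ M₂ * ‖y - (x - z)‖ := grad_lip hζ hM y (x - z)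
            _ ≤ M₂ * ‖z‖ := mul_le_mul_of_nonneg_left hyb hM0
  have key := Convex.norm_image_sub_le_of_norm_fderiv_le
    (fun y _ => (hdiff y).differentiableAt) hbound (convex_segment _ _)
    (left_mem_segment ℝ (x - z) x) (right_mem_segment ℝ (x - z) x)
  have hin : ⟪gradient ζ (x - z), x⟫ - ⟪gradient ζ (x - z), x - z⟫
      = ⟪z, gradient ζ (x - z)⟫ := by
    rw [← inner_sub_right, hx, real_inner_comm]
  have hgx : (ζ x - ⟪gradient ζ (x - z), x⟫) - (ζ (x - z) - ⟪gradient ζ (x - z), x - z⟫)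
      = ζ x - ζ (x - z) - ⟪z, gradient ζ (x - z)⟫ := by
    rw [← hin]; ring
  rw [Real.norm_eq_abs, hgx, hx] at key
  calc |ζ x - ζ (x - z) - ⟪z, gradient ζ (x - z)⟫| ≤ M₂ * ‖z‖ * ‖z‖ := key
    _ = M₂ * ‖z‖ ^ 2 := by ring

end Aux

/-- First-order commutator expansion: for `ζ ∈ C²` with
`‖∇²ζ‖_∞ ≤ M₂` and bounded measurable `v`,
`[ζ, G_{h/2}∗]v(x) = −(h/2)∇G_{h/2}∗(∇ζ v)(x) + R(x)` with
`|R(x)| ≤ C M₂ h (k_h∗|v|)(x)`, `C = C(d)`. -/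
theorem stmt9 (d : ℕ) :
    ∃ C : ℝ, 0 < C ∧ ∀ (h : ℝ), 0 < h →
      ∀ (ζ : EuclideanSpace ℝ (Fin d) → ℝ), ContDiff ℝ 2 ζ →
      ∀ M₂ : ℝ, (∀ x, ‖fderiv ℝ (fun y => gradient ζ y) x‖ ≤ M₂) →
      ∀ (v : EuclideanSpace ℝ (Fin d) → ℝ), Measurable v →
      ∀ Cv : ℝ, (∀ x, |v x| ≤ Cv) →
      ∀ x, |commG d (h / 2) ζ v x
          - (-(h / 2)) * ∫ z, ⟪gradGauss d (h / 2) z, gradient ζ (x - z)⟫ * v (x - z)|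
        ≤ C * M₂ * h * ∫ z, kker d h z * |v (x - z)| := by
  refine ⟨1, one_pos, ?_⟩
  intro h hh ζ hζ M₂ hM v hv Cv hCv x
  have hne : h ≠ 0 := ne_of_gt hh
  have hM0 : 0 ≤ M₂ := le_trans (norm_nonneg _) (hM x)
  have hCv0 : 0 ≤ Cv := le_trans (abs_nonneg _) (hCv x)
  set c : ℝ := (2 * π * (h / 2)) ^ (-(d : ℝ) / 2) with hc
  have hcpos : 0 < c := Real.rpow_pos_of_pos (by positivity) _
  set e : EuclideanSpace ℝ (Fin d) → ℝ := fun z => Real.exp (-(1 / h) * ‖z‖ ^ 2) with he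
  have hgauss_eq : ∀ z : EuclideanSpace ℝ (Fin d), gauss d (h / 2) z = c * e z := by
    intro z
    unfold gauss
    rw [show -‖z‖ ^ 2 / (2 * (h / 2)) = -(1 / h) * ‖z‖ ^ 2 by field_simp]
  have hgauss_fun : gauss d (h / 2) = fun z => c * e z := funext hgauss_eq
  have hg0 : ∀ z, 0 ≤ gauss d (h / 2) z := by
    intro z; rw [hgauss_eq z, he]; positivity
  set κ : ℝ := h ^ (-(d : ℝ) / 2) * π ^ (-(d : ℝ) / 2) / h with hκ
  have hκ0 : 0 < κ := by
    apply div_pos (mul_pos (Real.rpow_pos_of_pos hh _) (Real.rpow_pos_of_pos pi_pos _)) hh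
  have hkker_eq : ∀ z : EuclideanSpace ℝ (Fin d), kker d h z = κ * (‖z‖ ^ 2 * e z) := by
    intro z
    unfold kker
    rw [show -(‖z‖ ^ 2 / h) = -(1 / h) * ‖z‖ ^ 2 by ring, hκ, he]
    ring
  have hcκ : c = h * κ := by
    rw [hc, hκ, show 2 * π * (h / 2) = π * h by ring,
      Real.mul_rpow pi_pos.le hh.le]
    field_simp
  have hGk : ∀ z : EuclideanSpace ℝ (Fin d), gauss d (h / 2) z * ‖z‖ ^ 2 = h * kker d h z := by
    intro z
    rw [hgauss_eq z, hkker_eq z, hcκ]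
    ring
  -- measurability
  have hvz : Measurable (fun z : EuclideanSpace ℝ (Fin d) => v (x - z)) :=
    hv.comp (measurable_const.sub measurable_id)
  have hec : Continuous e := by rw [he]; fun_prop
  have hgc : Continuous (gauss d (h / 2)) := by rw [hgauss_fun]; fun_prop
  have hζc : Continuous ζ := hζ.continuous
  have hgradc : Continuous (gradient ζ) := (grad_contDiff hζ).continuous
  have hinnc : Continuous (fun z : EuclideanSpace ℝ (Fin d) =>
      ⟪z, gradient ζ (x - z)⟫) :=
    continuous_id.inner (hgradc.comp (continuous_const.sub continuous_id))
  -- pointwise bounds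
  have hgradb : ∀ z : EuclideanSpace ℝ (Fin d),
      ‖gradient ζ (x - z)‖ ≤ ‖gradient ζ x‖ + M₂ * ‖z‖ := by
    intro z
    have h1 : ‖gradient ζ (x - z) - gradient ζ x‖ ≤ M₂ * ‖z‖ := by
      have := grad_lip hζ hM (x - z) x
      rwa [show x - z - x = -z by abel, norm_neg] at this
    calc ‖gradient ζ (x - z)‖
        ≤ ‖gradient ζ x‖ + ‖gradient ζ (x - z) - gradient ζ x‖ := norm_le_insert' _ _
      _ ≤ ‖gradient ζ x‖ + M₂ * ‖z‖ := by linarith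
  have hinnb : ∀ z : EuclideanSpace ℝ (Fin d),
      |⟪z, gradient ζ (x - z)⟫| ≤ ‖z‖ * (‖gradient ζ x‖ + M₂ * ‖z‖) := by
    intro z
    calc |⟪z, gradient ζ (x - z)⟫| ≤ ‖z‖ * ‖gradient ζ (x - z)‖ := abs_real_inner_le_norm _ _
      _ ≤ ‖z‖ * (‖gradient ζ x‖ + M₂ * ‖z‖) := mul_le_mul_of_nonneg_left (hgradb z) (norm_nonneg z)
  have hζb : ∀ z : EuclideanSpace ℝ (Fin d),
      |ζ (x - z)| ≤ |ζ x| + ‖z‖ * (‖gradient ζ x‖ + M₂ * ‖z‖) + M₂ * ‖z‖ ^ 2 := by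
    intro z
    have ht := taylor_bound hζ hM x z
    have hi := hinnb z
    have h1 : |ζ (x - z)| ≤ |ζ x| + |⟪z, gradient ζ (x - z)⟫|
        + |ζ x - ζ (x - z) - ⟪z, gradient ζ (x - z)⟫| := by
      have := abs_add_le (ζ x - (ζ x - ζ (x - z) - ⟪z, gradient ζ (x - z)⟫))
        (- ⟪z, gradient ζ (x - z)⟫)
      have habs : |ζ x - (ζ x - ζ (x - z) - ⟪z, gradient ζ (x - z)⟫)
          + - ⟪z, gradient ζ (x - z)⟫| = |ζ (x - z)| := by
        congr 1; ring
      rw [habs, abs_neg] at this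
      calc |ζ (x - z)| ≤ |ζ x - (ζ x - ζ (x - z) - ⟪z, gradient ζ (x - z)⟫)|
            + |⟪z, gradient ζ (x - z)⟫| := this
        _ ≤ |ζ x| + |ζ x - ζ (x - z) - ⟪z, gradient ζ (x - z)⟫|
            + |⟪z, gradient ζ (x - z)⟫| := by
            gcongr
            exact abs_sub _ _
        _ = |ζ x| + |⟪z, gradient ζ (x - z)⟫|
            + |ζ x - ζ (x - z) - ⟪z, gradient ζ (x - z)⟫| := by ring
    linarith
  -- integrability
  have ha : (0 : ℝ) < 1 / h := by positivity
  have i₁ : Integrable (fun z : EuclideanSpace ℝ (Fin d) =>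
      gauss d (h / 2) z * v (x - z)) := by
    apply Integrable.mono' ((integrable_exp_gauss (1 / h) ha).const_mul (c * Cv))
    · exact (hgc.measurable.mul hvz).aestronglyMeasurable
    · filter_upwards with z
      rw [Real.norm_eq_abs, abs_mul, abs_of_nonneg (hg0 z), hgauss_eq z]
      calc c * e z * |v (x - z)| ≤ c * e z * Cv := by
            apply mul_le_mul_of_nonneg_left (hCv _) (by positivity)
        _ = c * Cv * Real.exp (-(1 / h) * ‖z‖ ^ 2) := by rw [he]; ring
  have i₂ : Integrable (fun z : EuclideanSpace ℝ (Fin d) =>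
      gauss d (h / 2) z * (ζ (x - z) * v (x - z))) := by
    have ig : Integrable (fun z : EuclideanSpace ℝ (Fin d) =>
        Cv * c * (|ζ x| * Real.exp (-(1 / h) * ‖z‖ ^ 2)
          + ‖gradient ζ x‖ * (‖z‖ * Real.exp (-(1 / h) * ‖z‖ ^ 2))
          + 2 * M₂ * (‖z‖ ^ 2 * Real.exp (-(1 / h) * ‖z‖ ^ 2)))) :=
      ((((integrable_exp_gauss (1 / h) ha).const_mul |ζ x|).add
        ((integrable_norm_exp_gauss (1 / h) ha).const_mul ‖gradient ζ x‖)).add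
        ((integrable_sq_exp_gauss (1 / h) ha).const_mul (2 * M₂))).const_mul (Cv * c)
    apply Integrable.mono' ig
    · exact (hgc.measurable.mul
        ((hζc.measurable.comp (measurable_const.sub measurable_id)).mul hvz)).aestronglyMeasurable
    · filter_upwards with z
      rw [Real.norm_eq_abs, abs_mul, abs_of_nonneg (hg0 z), abs_mul, hgauss_eq z]
      have h1 : |ζ (x - z)| * |v (x - z)|
          ≤ (|ζ x| + ‖z‖ * (‖gradient ζ x‖ + M₂ * ‖z‖) + M₂ * ‖z‖ ^ 2) * Cv :=
        mul_le_mul (hζb z) (hCv _) (abs_nonneg _) (le_trans (abs_nonneg _) (hζb z))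
      calc c * e z * (|ζ (x - z)| * |v (x - z)|)
          ≤ c * e z * ((|ζ x| + ‖z‖ * (‖gradient ζ x‖ + M₂ * ‖z‖) + M₂ * ‖z‖ ^ 2) * Cv) := by
            apply mul_le_mul_of_nonneg_left h1 (by positivity)
        _ = Cv * c * (|ζ x| * Real.exp (-(1 / h) * ‖z‖ ^ 2)
            + ‖gradient ζ x‖ * (‖z‖ * Real.exp (-(1 / h) * ‖z‖ ^ 2))
            + 2 * M₂ * (‖z‖ ^ 2 * Real.exp (-(1 / h) * ‖z‖ ^ 2))) := by rw [he]; ring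
  have i₃ : Integrable (fun z : EuclideanSpace ℝ (Fin d) =>
      gauss d (h / 2) z * ⟪z, gradient ζ (x - z)⟫ * v (x - z)) := by
    have ig : Integrable (fun z : EuclideanSpace ℝ (Fin d) =>
        Cv * c * (‖gradient ζ x‖ * (‖z‖ * Real.exp (-(1 / h) * ‖z‖ ^ 2))
          + M₂ * (‖z‖ ^ 2 * Real.exp (-(1 / h) * ‖z‖ ^ 2)))) :=
      (((integrable_norm_exp_gauss (1 / h) ha).const_mul ‖gradient ζ x‖).add
        ((integrable_sq_exp_gauss (1 / h) ha).const_mul M₂)).const_mul (Cv * c)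
    apply Integrable.mono' ig
    · exact ((hgc.measurable.mul hinnc.measurable).mul hvz).aestronglyMeasurable
    · filter_upwards with z
      rw [Real.norm_eq_abs, abs_mul, abs_mul, abs_of_nonneg (hg0 z), hgauss_eq z]
      have h1 : |⟪z, gradient ζ (x - z)⟫| * |v (x - z)| ≤ ‖z‖ * (‖gradient ζ x‖ + M₂ * ‖z‖) * Cv :=
        mul_le_mul (hinnb z) (hCv _) (abs_nonneg _) (le_trans (abs_nonneg _) (hinnb z))
      calc c * e z * |⟪z, gradient ζ (x - z)⟫| * |v (x - z)|
          = c * e z * (|⟪z, gradient ζ (x - z)⟫| * |v (x - z)|) := by ring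
        _ ≤ c * e z * (‖z‖ * (‖gradient ζ x‖ + M₂ * ‖z‖) * Cv) := by
            apply mul_le_mul_of_nonneg_left h1 (by positivity)
        _ = Cv * c * (‖gradient ζ x‖ * (‖z‖ * Real.exp (-(1 / h) * ‖z‖ ^ 2))
            + M₂ * (‖z‖ ^ 2 * Real.exp (-(1 / h) * ‖z‖ ^ 2))) := by rw [he]; ring
  have i₄ : Integrable (fun z : EuclideanSpace ℝ (Fin d) => kker d h z * |v (x - z)|) := by
    apply Integrable.mono' ((integrable_sq_exp_gauss (1 / h) ha).const_mul (κ * Cv))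
    · have hkc : Continuous (kker d h) := by
        rw [show kker d h = fun z => κ * (‖z‖ ^ 2 * e z) from funext hkker_eq, he]
        fun_prop
      exact (hkc.measurable.mul hvz.abs).aestronglyMeasurable
    · filter_upwards with z
      have hk0 : 0 ≤ kker d h z := by rw [hkker_eq z, he]; positivity
      rw [Real.norm_eq_abs, abs_mul, abs_of_nonneg hk0, abs_abs, hkker_eq z]
      calc κ * (‖z‖ ^ 2 * e z) * |v (x - z)| ≤ κ * (‖z‖ ^ 2 * e z) * Cv := by
            apply mul_le_mul_of_nonneg_left (hCv _) (by positivity)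
        _ = κ * Cv * (‖z‖ ^ 2 * Real.exp (-(1 / h) * ‖z‖ ^ 2)) := by rw [he]; ring
  -- key identity
  have hscal : ∀ X : ℝ, -(h / 2) * (-(2 / h) * X) = X := by
    intro X; field_simp
  have e3 : (∫ z, ⟪gradGauss d (h / 2) z, gradient ζ (x - z)⟫ * v (x - z))
      = (-(2 / h)) * ∫ z, gauss d (h / 2) z * ⟪z, gradient ζ (x - z)⟫ * v (x - z) := by
    rw [← integral_const_mul]
    congr 1
    funext z
    unfold gradGauss
    rw [real_inner_smul_left]
    rw [show -gauss d (h / 2) z / (h / 2) = -(2 / h) * gauss d (h / 2) z by rw [div_eq_mul_inv, inv_div]; ring]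
    ring
  have e1 : ζ x * conv d (gauss d (h / 2)) v x
      = ∫ z, ζ x * (gauss d (h / 2) z * v (x - z)) := by
    unfold conv
    rw [integral_const_mul]
  have e2 : conv d (gauss d (h / 2)) (fun y => ζ y * v y) x
      = ∫ z, gauss d (h / 2) z * (ζ (x - z) * v (x - z)) := rfl
  have Efin : (∫ z, gauss d (h / 2) z
        * (ζ x - ζ (x - z) - ⟪z, gradient ζ (x - z)⟫) * v (x - z))
      = ((∫ z, ζ x * (gauss d (h / 2) z * v (x - z)))
          - ∫ z, gauss d (h / 2) z * (ζ (x - z) * v (x - z)))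
        - ∫ z, gauss d (h / 2) z * ⟪z, gradient ζ (x - z)⟫ * v (x - z) := by
    calc (∫ z, gauss d (h / 2) z
          * (ζ x - ζ (x - z) - ⟪z, gradient ζ (x - z)⟫) * v (x - z))
        = ∫ z, ((ζ x * (gauss d (h / 2) z * v (x - z))
            - gauss d (h / 2) z * (ζ (x - z) * v (x - z)))
            - gauss d (h / 2) z * ⟪z, gradient ζ (x - z)⟫ * v (x - z)) := by
          congr 1
          funext z
          ring
      _ = (∫ z, (ζ x * (gauss d (h / 2) z * v (x - z))
            - gauss d (h / 2) z * (ζ (x - z) * v (x - z))))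
          - ∫ z, gauss d (h / 2) z * ⟪z, gradient ζ (x - z)⟫ * v (x - z) :=
          integral_sub ((i₁.const_mul (ζ x)).sub i₂) i₃
      _ = ((∫ z, ζ x * (gauss d (h / 2) z * v (x - z)))
            - ∫ z, gauss d (h / 2) z * (ζ (x - z) * v (x - z)))
          - ∫ z, gauss d (h / 2) z * ⟪z, gradient ζ (x - z)⟫ * v (x - z) := by
          rw [integral_sub (i₁.const_mul (ζ x)) i₂]
  have keyeq : commG d (h / 2) ζ v x
      - (-(h / 2)) * ∫ z, ⟪gradGauss d (h / 2) z, gradient ζ (x - z)⟫ * v (x - z)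
      = ∫ z, gauss d (h / 2) z
          * (ζ x - ζ (x - z) - ⟪z, gradient ζ (x - z)⟫) * v (x - z) := by
    unfold commG
    rw [e1, e2, e3, hscal, Efin]
  rw [keyeq]
  have hb : ∀ z : EuclideanSpace ℝ (Fin d),
      ‖gauss d (h / 2) z * (ζ x - ζ (x - z) - ⟪z, gradient ζ (x - z)⟫) * v (x - z)‖
        ≤ M₂ * h * (kker d h z * |v (x - z)|) := by
    intro z
    rw [Real.norm_eq_abs, abs_mul, abs_mul, abs_of_nonneg (hg0 z)]
    have ht := taylor_bound hζ hM x z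
    calc gauss d (h / 2) z * |ζ x - ζ (x - z) - ⟪z, gradient ζ (x - z)⟫| * |v (x - z)|
        ≤ gauss d (h / 2) z * (M₂ * ‖z‖ ^ 2) * |v (x - z)| := by
          apply mul_le_mul_of_nonneg_right _ (abs_nonneg _)
          exact mul_le_mul_of_nonneg_left ht (hg0 z)
      _ = M₂ * (gauss d (h / 2) z * ‖z‖ ^ 2) * |v (x - z)| := by ring
      _ = M₂ * h * (kker d h z * |v (x - z)|) := by rw [hGk z]; ring
  have hfinal := norm_integral_le_of_norm_le (i₄.const_mul (M₂ * h)) (ae_of_all _ hb)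
  rw [integral_const_mul] at hfinal
  rw [Real.norm_eq_abs] at hfinal
  calc |∫ z, gauss d (h / 2) z * (ζ x - ζ (x - z) - ⟪z, gradient ζ (x - z)⟫) * v (x - z)|
      ≤ M₂ * h * ∫ z, kker d h z * |v (x - z)| := hfinal
    _ = 1 * M₂ * h * ∫ z, kker d h z * |v (x - z)| := by ring
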